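/- Let p be a prime and n ≥ 1. There exists a nonzero constant c ∈ F_p, depending only on n and p, such that for every field k of characteristic p and all λ_0, …, λ_{n−1} ∈ k, the determinant of the n×n matrix whose (i,j) entry is λ_i^{p^j} (0 ≤ i, j ≤ n−1) equals c · ∏_α (α_0 λ_0 + ⋯ + α_{n−1} λ_{n−1}), where the product runs over all nonzero vectors α = (α_0, …, α_{n−1}) ∈ F_p^n whose first nonzero coordinate equals 1 (a set of representatives for the points of P^{n−1}(F_p)). -/

import Mathlib

open MvPolynomial


namespace Stmt8Aux

variable {σ : Type} {R : Type} [CommRing R]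

lemma degree_single (a : σ) (b : ℕ) : (Finsupp.single a b).degree = b := by
  classical
  rcases eq_or_ne b 0 with h | h
  · simp [h, Finsupp.degree]
  · exact Finsupp.degree_single a b

noncomputable def Phi : MvPolynomial σ R →ₐ[R] Polynomial (MvPolynomial σ R) :=
  aeval fun i => Polynomial.C (X i) * Polynomial.X

lemma Phi_monomial (m : σ →₀ ℕ) (a : R) :
    Phi (monomial m a) = Polynomial.C (monomial m a) * Polynomial.X ^ m.degree := by
  classical
  rw [monomial_eq, map_mul]
  have h1 : (Phi (σ := σ) (R := R)) (C a) = Polynomial.C (C a) := by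
    simp [Phi]
  have h2 : Phi (m.prod fun i e => (X i : MvPolynomial σ R) ^ e)
      = Polynomial.C (m.prod fun i e => (X i : MvPolynomial σ R) ^ e)
        * Polynomial.X ^ m.degree := by
    rw [Finsupp.prod, map_prod]
    have h3 : ∀ i ∈ m.support, Phi ((X i : MvPolynomial σ R) ^ m i)
        = Polynomial.C ((X i : MvPolynomial σ R) ^ m i) * Polynomial.X ^ m i := by
      intro i _
      rw [map_pow]
      simp [Phi, mul_pow, ← map_pow]
    rw [Finset.prod_congr rfl h3, Finset.prod_mul_distrib, ← map_prod,
      Finset.prod_pow_eq_pow_sum]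
    rfl
  rw [h1, h2, ← mul_assoc, ← map_mul]

lemma coeff_Phi (f : MvPolynomial σ R) (d : ℕ) :
    (Phi f).coeff d = homogeneousComponent d f := by
  classical
  conv_lhs => rw [← support_sum_monomial_coeff f]
  rw [map_sum, Polynomial.finset_sum_coeff, homogeneousComponent_apply, Finset.sum_filter]
  apply Finset.sum_congr rfl
  intro m _
  rw [Phi_monomial, Polynomial.coeff_C_mul, Polynomial.coeff_X_pow]
  by_cases h : m.degree = d <;> simp [h, Ne.symm]

lemma Phi_of_isHomogeneous {f : MvPolynomial σ R} {e : ℕ} (hf : f.IsHomogeneous e) :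
    Phi f = Polynomial.C f * Polynomial.X ^ e := by
  ext d
  rw [coeff_Phi, Polynomial.coeff_C_mul, Polynomial.coeff_X_pow,
    homogeneousComponent_of_mem ((mem_homogeneousSubmodule _ _).2 hf)]
  by_cases h : d = e <;> simp [h]

lemma eq_C_of_mul_homogeneous [IsDomain R] {P q D : MvPolynomial σ R} {e : ℕ}
    (hP : P.IsHomogeneous e) (hP0 : P ≠ 0) (hD : D.IsHomogeneous e) (h : P * q = D) :
    q = C (constantCoeff q) := by
  have h2 : Polynomial.C P * Polynomial.X ^ e * Phi q = Polynomial.C D * Polynomial.X ^ e := by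
    rw [← Phi_of_isHomogeneous hP, ← Phi_of_isHomogeneous hD, ← map_mul, h]
  have hx : (Polynomial.X ^ e : Polynomial (MvPolynomial σ R)) ≠ 0 :=
    pow_ne_zero _ Polynomial.X_ne_zero
  have h3 : Polynomial.C P * Phi q = Polynomial.C D := by
    apply mul_right_cancel₀ hx
    rw [← h2]; ring
  have hcomp : ∀ d : ℕ, 0 < d → homogeneousComponent d q = 0 := by
    intro d hd
    have h4 := congrArg (fun r => Polynomial.coeff r d) h3
    simp only [Polynomial.coeff_C_mul, coeff_Phi, Polynomial.coeff_C, hd.ne', if_false] at h4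
    exact (mul_eq_zero.mp h4).resolve_left hP0
  conv_lhs => rw [← sum_homogeneousComponent q]
  rw [Finset.sum_range_succ']
  have : ∀ i ∈ Finset.range q.totalDegree, homogeneousComponent (i + 1) q = 0 := by
    intro i _; exact hcomp _ (Nat.succ_pos i)
  rw [Finset.sum_congr rfl this, Finset.sum_const, smul_zero, zero_add,
    homogeneousComponent_zero]
  rfl

end Stmt8Aux


namespace Stmt8Aux2

lemma prod_primes_dvd {M : Type*} [CommMonoidWithZero M] [IsCancelMulZero M] {ι : Type*}
    (s : Finset ι) (f : ι → M) (z : M)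
    (hp : ∀ i ∈ s, Prime (f i)) (hd : ∀ i ∈ s, f i ∣ z)
    (hnd : ∀ i ∈ s, ∀ j ∈ s, i ≠ j → ¬ f i ∣ f j) :
    ∏ i ∈ s, f i ∣ z := by
  classical
  induction s using Finset.induction_on generalizing z with
  | empty => simp
  | @insert a s ha ih =>
    obtain ⟨m, hm⟩ := hd a (Finset.mem_insert_self a s)
    rw [Finset.prod_insert ha]
    have hrest : ∏ i ∈ s, f i ∣ m := by
      apply ih
      · intro i hi; exact hp i (Finset.mem_insert_of_mem hi)
      · intro i hi
        have h1 : f i ∣ f a * m := hm ▸ hd i (Finset.mem_insert_of_mem hi)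
        rcases (hp i (Finset.mem_insert_of_mem hi)).2.2 _ _ h1 with h | h
        · exact absurd h (hnd i (Finset.mem_insert_of_mem hi) a
            (Finset.mem_insert_self a s) (by rintro rfl; exact ha hi))
        · exact h
      · intro i hi j hj hij
        exact hnd i (Finset.mem_insert_of_mem hi) j (Finset.mem_insert_of_mem hj) hij
    obtain ⟨t, rfl⟩ := hrest
    exact ⟨t, by rw [hm, mul_assoc]⟩

lemma dvd_sub_aeval {σ R : Type*} [CommRing R] (g : σ → MvPolynomial σ R)
    (u : MvPolynomial σ R) (hg : ∀ i, u ∣ X i - g i) (f : MvPolynomial σ R) :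
    u ∣ f - aeval g f := by
  induction f using MvPolynomial.induction_on with
  | C a => simp
  | add f f' hf hf' =>
    have := dvd_add hf hf'
    rw [map_add]
    convert this using 1
    ring
  | mul_X f i hf =>
    rw [map_mul, aeval_X]
    have : f * X i - aeval g f * g i = (f - aeval g f) * X i + aeval g f * (X i - g i) := by ring
    rw [this]
    exact dvd_add (hf.mul_right _) ((hg i).mul_left _)

lemma prod_monomial_one {σ R ι : Type*} [CommRing R] (s : Finset ι) (d : ι → (σ →₀ ℕ)) :
    (∏ i ∈ s, monomial (d i) (1 : R)) = monomial (∑ i ∈ s, d i) 1 := by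
  classical
  induction s using Finset.induction_on with
  | empty => simp
  | @insert a s ha ih =>
    rw [Finset.prod_insert ha, Finset.sum_insert ha, ih, monomial_mul, mul_one]
end Stmt8Aux2


namespace Stmt8Main

variable {p : ℕ} [Fact p.Prime]

noncomputable def L {n : ℕ} (α : Fin n → ZMod p) : MvPolynomial (Fin n) (ZMod p) :=
  ∑ i, C (α i) * X i

lemma coeff_L {n : ℕ} (α : Fin n → ZMod p) (j : Fin n) :
    coeff (Finsupp.single j 1) (L α) = α j := by
  classical
  rw [L, coeff_sum]
  rw [Finset.sum_eq_single j]
  · rw [coeff_C_mul, coeff_X', if_pos rfl, mul_one]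
  · intro i _ hij
    rw [coeff_C_mul, coeff_X', if_neg, mul_zero]
    intro h
    exact hij ((Finsupp.single_left_inj one_ne_zero).mp h)
  · intro h; exact absurd (Finset.mem_univ j) h

lemma L_isHomogeneous {n : ℕ} (α : Fin n → ZMod p) : (L α).IsHomogeneous 1 := by
  apply IsHomogeneous.sum
  intro i _
  rw [show (C (α i) * X i : MvPolynomial (Fin n) (ZMod p)) = monomial (Finsupp.single i 1) (α i) by
    rw [X, C_mul_monomial, mul_one]]
  exact isHomogeneous_monomial _ (by
    classical
    rcases eq_or_ne ((1:ℕ)) 0 with h|h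
    · simp at h
    · exact Finsupp.degree_single i 1)

/-- The substitution sending `X i0` to `X i0 - L α` and fixing other variables. -/
noncomputable def g {n : ℕ} (α : Fin n → ZMod p) (i0 : Fin n) : Fin n → MvPolynomial (Fin n) (ZMod p) :=
  fun i => if i = i0 then X i0 - L α else X i

lemma X_sub_g {n : ℕ} (α : Fin n → ZMod p) (i0 : Fin n) (i : Fin n) :
    X i - g α i0 i = if i = i0 then L α else 0 := by
  rcases eq_or_ne i i0 with rfl | h <;> simp [g, *]

lemma aeval_g_L {n : ℕ} (α β : Fin n → ZMod p) (i0 : Fin n) :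
    aeval (g α i0) (L β) = L β - C (β i0) * L α := by
  classical
  rw [L, map_sum]
  have h1 : ∀ i : Fin n, aeval (g α i0) (C (β i) * X i)
      = C (β i) * X i - C (β i) * (if i = i0 then L α else 0) := by
    intro i
    rw [map_mul, aeval_X, algHom_C]
    rcases eq_or_ne i i0 with rfl | h <;> simp [g, *] <;> ring
  rw [Finset.sum_congr rfl fun i _ => h1 i, Finset.sum_sub_distrib, ← L]
  congr 1
  rw [Finset.sum_eq_single i0]
  · simp
  · intro i _ h; simp [h]
  · intro h; exact absurd (Finset.mem_univ i0) h

lemma aeval_g_L_self {n : ℕ} (α : Fin n → ZMod p) (i0 : Fin n) (h : α i0 = 1) :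
    aeval (g α i0) (L α) = 0 := by
  rw [aeval_g_L, h, map_one, one_mul, sub_self]


lemma prime_L_zero {m : ℕ} (β : Fin (m + 1) → ZMod p) (hβ : β 0 = 1) : Prime (L β) := by
  rw [← MulEquiv.prime_iff (MvPolynomial.finSuccEquiv (ZMod p) m).toMulEquiv]
  have hg : (MvPolynomial.finSuccEquiv (ZMod p) m) (L β)
      = Polynomial.X - Polynomial.C (-(∑ i : Fin m, C (β i.succ) * X i)) := by
    rw [map_neg, sub_neg_eq_add, L, map_sum, Fin.sum_univ_succ, map_mul, hβ, map_one, map_one,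
      finSuccEquiv_X_zero, one_mul]
    congr 1
    rw [map_sum Polynomial.C]
    apply Finset.sum_congr rfl
    intro i _
    rw [map_mul, finSuccEquiv_X_succ, map_mul]
    congr 1
    simp [MvPolynomial.finSuccEquiv_apply]
  rw [show ((MvPolynomial.finSuccEquiv (ZMod p) m).toMulEquiv (L β))
    = (MvPolynomial.finSuccEquiv (ZMod p) m) (L β) from rfl, hg]
  exact Polynomial.prime_X_sub_C _

lemma prime_L {n : ℕ} (α : Fin n → ZMod p) (i0 : Fin n) (h1 : α i0 = 1) (hn : 1 ≤ n) :
    Prime (L α) := by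
  obtain ⟨m, rfl⟩ : ∃ m, n = m + 1 := ⟨n - 1, by omega⟩
  classical
  set e := Equiv.swap (0 : Fin (m+1)) i0 with he
  rw [← MulEquiv.prime_iff (MvPolynomial.renameEquiv (ZMod p) e).toMulEquiv]
  have hre : rename e (L α) = L (α ∘ e) := by
    rw [L, map_sum, L]
    rw [← Equiv.sum_comp e (fun k => C ((α ∘ e) k) * X k)]
    apply Finset.sum_congr rfl
    intro i _
    rw [map_mul, rename_C, rename_X]
    congr 2
    simp [he, Function.comp, Equiv.swap_apply_self]
  rw [show ((MvPolynomial.renameEquiv (ZMod p) e).toMulEquiv (L α)) = rename e (L α) from rfl,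
    hre]
  exact prime_L_zero (α ∘ e) (by simp [he, Function.comp, Equiv.swap_apply_left, h1])

lemma L_eq_smul_of_dvd {n : ℕ} {α β : Fin n → ZMod p} (i0 : Fin n) (h1 : α i0 = 1)
    (hdvd : L α ∣ L β) : L β = C (β i0) * L α := by
  obtain ⟨t, ht⟩ := hdvd
  have h0 : aeval (g α i0) (L β) = 0 := by
    rw [ht, map_mul, aeval_g_L_self α i0 h1, zero_mul]
  rw [aeval_g_L] at h0
  exact sub_eq_zero.mp h0

lemma frob_L {n : ℕ} (α : Fin n → ZMod p) (j : ℕ) :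
    (L α) ^ p ^ j = ∑ k, C (α k) * X k ^ p ^ j := by
  rw [← iterateFrobenius_def, L, map_sum]
  apply Finset.sum_congr rfl
  intro k _
  rw [iterateFrobenius_def, mul_pow, ← map_pow, ZMod.pow_card_pow]

lemma aeval_g_det_zero {n : ℕ} (α : Fin n → ZMod p) (i0 : Fin n) (h1 : α i0 = 1) :
    aeval (g α i0) (Matrix.det (Matrix.of fun i j : Fin n =>
      (X i : MvPolynomial (Fin n) (ZMod p)) ^ p ^ (j : ℕ))) = 0 := by
  classical
  set M : Matrix (Fin n) (Fin n) (MvPolynomial (Fin n) (ZMod p)) :=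
    Matrix.of (fun i j : Fin n => (X i : MvPolynomial (Fin n) (ZMod p)) ^ p ^ (j : ℕ)) with hM
  set c : Fin n → MvPolynomial (Fin n) (ZMod p) :=
    fun i => if i = i0 then 0 else -C (α i) with hc
  have hmap : (aeval (g α i0)).toRingHom.mapMatrix M
      = M.updateRow i0 (∑ i, c i • M i) := by
    apply Matrix.ext
    intro i j
    rw [RingHom.mapMatrix_apply, Matrix.map_apply, Matrix.updateRow_apply]
    rcases eq_or_ne i i0 with rfl | h
    · rw [if_pos rfl]
      have hentry : (aeval (g α i)).toRingHom (M i j) = (X i - L α) ^ p ^ (j : ℕ) := by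
        rw [hM]
        simp only [Matrix.of_apply, map_pow]
        rw [show (aeval (g α i)).toRingHom (X i) = g α i i from aeval_X _ _, g, if_pos rfl]
      rw [hentry, sub_pow_char_pow, frob_L]
      have hsum : ∀ k : Fin n, c k * M k j
          = -(C (α k) * X k ^ p ^ (j : ℕ)) + (if k = i then C (α i) * X i ^ p ^ (j:ℕ) else 0) := by
        intro k
        rcases eq_or_ne k i with rfl | hk
        · rw [hc]; simp [hM]
        · rw [hc]; simp [hk, hM]
      simp only [Finset.sum_apply, Pi.smul_apply, smul_eq_mul]
      rw [Finset.sum_congr rfl fun k _ => hsum k]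
      rw [Finset.sum_add_distrib, Finset.sum_ite_eq' Finset.univ i
        (fun _ => C (α i) * X i ^ p ^ (j:ℕ)), if_pos (Finset.mem_univ i), h1, map_one, one_mul,
        Finset.sum_neg_distrib]
      ring
    · rw [if_neg h]
      rw [hM]
      simp only [Matrix.of_apply, map_pow]
      rw [show (aeval (g α i0)).toRingHom (X i) = g α i0 i from aeval_X _ _, g, if_neg h]
  have hdet := RingHom.map_det (aeval (g α i0)).toRingHom M
  rw [show aeval (g α i0) M.det = (aeval (g α i0)).toRingHom M.det from rfl, hdet, hmap,
    Matrix.det_updateRow_sum]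
  rw [hc]
  simp


/-- The exponent Finsupp of the permutation term. -/
noncomputable def msum (p : ℕ) {n : ℕ} (sf : Equiv.Perm (Fin n)) : Fin n →₀ ℕ :=
  ∑ i, Finsupp.single (sf i) (p ^ (i : ℕ))

lemma msum_apply {n : ℕ} (sf : Equiv.Perm (Fin n)) (t : Fin n) :
    msum p sf t = p ^ ((sf.symm t : Fin n) : ℕ) := by
  classical
  rw [msum, Finsupp.finset_sum_apply]
  rw [Finset.sum_eq_single (sf.symm t)]
  · rw [Finsupp.single_apply, if_pos (sf.apply_symm_apply t)]
  · intro i _ hi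
    rw [Finsupp.single_apply, if_neg]
    intro h
    exact hi (by rw [← h, Equiv.symm_apply_apply])
  · intro h; exact absurd (Finset.mem_univ _) h

lemma degree_msum {n : ℕ} (sf : Equiv.Perm (Fin n)) :
    (msum p sf).degree = ∑ j ∈ Finset.range n, p ^ j := by
  rw [msum, Finsupp.degree_eq_weight_one, map_sum, ← Fin.sum_univ_eq_sum_range (fun j => p ^ j) n]
  apply Finset.sum_congr rfl
  intro i _
  rw [← Finsupp.degree_eq_weight_one, Stmt8Aux.degree_single]

lemma Drep (n : ℕ) :
    Matrix.det (Matrix.of fun i j : Fin n =>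
        (X i : MvPolynomial (Fin n) (ZMod p)) ^ p ^ (j : ℕ))
      = ∑ sf : Equiv.Perm (Fin n),
          monomial (msum p sf) (((Equiv.Perm.sign sf : ℤ) : ZMod p)) := by
  classical
  rw [Matrix.det_apply']
  apply Finset.sum_congr rfl
  intro sf _
  have h1 : ∏ i, (Matrix.of fun i j : Fin n =>
      (X i : MvPolynomial (Fin n) (ZMod p)) ^ p ^ (j : ℕ)) (sf i) i
      = monomial (msum p sf) 1 := by
    rw [msum, ← Stmt8Aux2.prod_monomial_one Finset.univ
      (fun i : Fin n => Finsupp.single (sf i) (p ^ (i:ℕ)))]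
    apply Finset.prod_congr rfl
    intro i _
    rw [Matrix.of_apply, X_pow_eq_monomial]
  rw [h1, show (((Equiv.Perm.sign sf : ℤ)) : MvPolynomial (Fin n) (ZMod p))
      = C (((Equiv.Perm.sign sf : ℤ) : ZMod p)) from (map_intCast (C : ZMod p →+* _) _).symm,
    C_mul_monomial, mul_one]


lemma D_isHomogeneous (n : ℕ) :
    (Matrix.det (Matrix.of fun i j : Fin n =>
      (X i : MvPolynomial (Fin n) (ZMod p)) ^ p ^ (j : ℕ))).IsHomogeneous
      (∑ j ∈ Finset.range n, p ^ j) := by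
  rw [Drep]
  apply IsHomogeneous.sum
  intro sf _
  exact isHomogeneous_monomial _ (degree_msum sf)

lemma D_ne_zero (n : ℕ) :
    Matrix.det (Matrix.of fun i j : Fin n =>
      (X i : MvPolynomial (Fin n) (ZMod p)) ^ p ^ (j : ℕ)) ≠ 0 := by
  classical
  intro h0
  have h1 : coeff (msum p (1 : Equiv.Perm (Fin n)))
      (Matrix.det (Matrix.of fun i j : Fin n =>
        (X i : MvPolynomial (Fin n) (ZMod p)) ^ p ^ (j : ℕ))) = 1 := by
    rw [Drep, coeff_sum, Finset.sum_eq_single_of_mem (1 : Equiv.Perm (Fin n))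
      (Finset.mem_univ _)]
    · rw [coeff_monomial, if_pos rfl]; simp
    · intro sf _ hsf
      rw [coeff_monomial, if_neg]
      intro heq
      apply hsf
      have hps : (2:ℕ) ≤ p := (Fact.out : p.Prime).two_le
      have hsymm : ∀ t : Fin n, sf.symm t = t := by
        intro t
        have := congrFun (congrArg (fun m : Fin n →₀ ℕ => (m : Fin n → ℕ)) heq) t
        simp only [msum_apply] at this
        have h2 : ((sf.symm t : Fin n) : ℕ) = (t : ℕ) := by
          have h3 := Nat.pow_right_injective hps this
          simpa [Equiv.Perm.one_symm] using h3
        exact Fin.val_injective h2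
      apply Equiv.ext
      intro t
      have := hsymm (sf t)
      rw [Equiv.symm_apply_apply] at this
      exact this.symm
  rw [h0, coeff_zero] at h1
  exact one_ne_zero h1.symm

lemma card_S (n : ℕ) (hn : 1 ≤ n) :
    (Finset.univ.filter
        (fun α : Fin n → ZMod p => ∃ i, α i = 1 ∧ ∀ j < i, α j = 0)).card
      = ∑ j ∈ Finset.range n, p ^ j := by
  classical
  have huniq : ∀ (α : Fin n → ZMod p) (i i' : Fin n),
      (α i = 1 ∧ ∀ j < i, α j = 0) → (α i' = 1 ∧ ∀ j < i', α j = 0) → i = i' := by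
    intro α i i' hi hi'
    rcases lt_trichotomy i i' with h | h | h
    · exact absurd (hi'.2 i h) (by rw [hi.1]; exact one_ne_zero)
    · exact h
    · exact absurd (hi.2 i' h) (by rw [hi'.1]; exact one_ne_zero)
  set pivot : (Fin n → ZMod p) → Fin n := fun α =>
    if h : ∃ i, α i = 1 ∧ ∀ j < i, α j = 0 then h.choose else ⟨0, hn⟩ with hpivot
  rw [Finset.card_eq_sum_card_fiberwise
    (f := pivot) (t := Finset.univ) (fun x _ => Finset.mem_univ _)]
  have hfiber : ∀ i : Fin n,
      ((Finset.univ.filter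
        (fun α : Fin n → ZMod p => ∃ i, α i = 1 ∧ ∀ j < i, α j = 0)).filter
          (fun α => pivot α = i))
      = Finset.univ.filter (fun α : Fin n → ZMod p => α i = 1 ∧ ∀ j < i, α j = 0) := by
    intro i
    ext α
    simp only [Finset.mem_filter, Finset.mem_univ, true_and]
    constructor
    · rintro ⟨⟨i', hi'⟩, rfl⟩
      have hex : ∃ i, α i = 1 ∧ ∀ j < i, α j = 0 := ⟨i', hi'⟩
      rw [hpivot]
      simp only [dif_pos hex]
      exact hex.choose_spec
    · intro h
      refine ⟨⟨i, h⟩, ?_⟩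
      have hex : ∃ i, α i = 1 ∧ ∀ j < i, α j = 0 := ⟨i, h⟩
      rw [hpivot]
      simp only [dif_pos hex]
      exact huniq α _ _ hex.choose_spec h
  have hcard : ∀ i : Fin n,
      (Finset.univ.filter (fun α : Fin n → ZMod p => α i = 1 ∧ ∀ j < i, α j = 0)).card
        = p ^ (n - 1 - (i : ℕ)) := by
    intro i
    have hbij : (Finset.univ.filter
        (fun α : Fin n → ZMod p => α i = 1 ∧ ∀ j < i, α j = 0)).card
        = (Finset.univ : Finset ({j : Fin n // i < j} → ZMod p)).card := by
      refine Finset.card_bij' (fun α _ => fun j => α j.val)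
        (fun f _ => fun j => if h : i < j then f ⟨j, h⟩ else if j = i then 1 else 0)
        ?hi ?hj ?left ?right
      case hi => intro α ha; exact Finset.mem_univ _
      case hj =>
        intro f hf
        simp only [Finset.mem_filter, Finset.mem_univ, true_and]
        constructor
        · simp
        · intro j hj
          rw [dif_neg (not_lt_of_gt hj), if_neg (ne_of_lt hj)]
      case left =>
        intro α ha
        simp only [Finset.mem_filter, Finset.mem_univ, true_and] at ha
        funext j
        dsimp only
        rcases lt_trichotomy i j with h | h | h
        · rw [dif_pos h]
        · subst h
          rw [dif_neg (lt_irrefl i), if_pos rfl]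
          exact ha.1.symm
        · rw [dif_neg (not_lt_of_gt h), if_neg (ne_of_lt h)]
          exact (ha.2 j h).symm
      case right =>
        intro f hf
        funext j
        dsimp only
        rw [dif_pos j.2]
    rw [hbij, Finset.card_univ, Fintype.card_fun, ZMod.card]
    congr 1
    rw [Fintype.card_subtype, show (Finset.filter (fun j => i < j) Finset.univ) = Finset.Ioi i by
      ext j; simp, Fin.card_Ioi]
  rw [Finset.sum_congr rfl (fun i _ => (hfiber i).symm ▸ hcard i)]
  rw [Fin.sum_univ_eq_sum_range (fun i => p ^ (n - 1 - i)) n,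
    Finset.sum_range_reflect (fun j => p ^ j) n]

end Stmt8Main



universe u

/-- The Moore determinant identity. For a prime `p` and `n ≥ 1` there is a
nonzero constant `c ∈ 𝔽_p`, depending only on `n` and `p`, such that for every field `k` of
characteristic `p` and all `λ₀, …, λ_{n-1} ∈ k`,
`det (λ_i^{p^j}) = c * ∏_α (α₀ λ₀ + ⋯ + α_{n-1} λ_{n-1})`,
the product being over the nonzero vectors `α ∈ 𝔽_p^n` whose first nonzero coordinate is `1`. -/
theorem stmt8 (p : ℕ) [Fact p.Prime] (n : ℕ) (hn : 1 ≤ n) :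
    ∃ c : ZMod p, c ≠ 0 ∧
      ∀ (k : Type u) [Field k] [CharP k p] [Algebra (ZMod p) k] (lam : Fin n → k),
        Matrix.det (Matrix.of fun i j : Fin n => lam i ^ p ^ (j : ℕ)) =
          algebraMap (ZMod p) k c *
            ∏ α ∈ Finset.univ.filter
                (fun α : Fin n → ZMod p => ∃ i, α i = 1 ∧ ∀ j < i, α j = 0),
              ∑ i, α i • lam i := by
  classical
  set D : MvPolynomial (Fin n) (ZMod p) :=
    Matrix.det (Matrix.of fun i j : Fin n =>
      (X i : MvPolynomial (Fin n) (ZMod p)) ^ p ^ (j : ℕ)) with hD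
  set S : Finset (Fin n → ZMod p) :=
    Finset.univ.filter (fun α : Fin n → ZMod p => ∃ i, α i = 1 ∧ ∀ j < i, α j = 0) with hS
  have hmem : ∀ α ∈ S, ∃ i0, α i0 = 1 ∧ ∀ j < i0, α j = 0 := by
    intro α hα
    rw [hS, Finset.mem_filter] at hα
    exact hα.2
  have hdvd : ∀ α ∈ S, Stmt8Main.L α ∣ D := by
    intro α hα
    obtain ⟨i0, h1, _⟩ := hmem α hα
    have h2 := Stmt8Aux2.dvd_sub_aeval (Stmt8Main.g α i0) (Stmt8Main.L α)
      (fun i => by rw [Stmt8Main.X_sub_g]; split <;> simp) D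
    rw [hD] at h2 ⊢
    rwa [Stmt8Main.aeval_g_det_zero α i0 h1, sub_zero] at h2
  have hprime : ∀ α ∈ S, Prime (Stmt8Main.L α) := by
    intro α hα
    obtain ⟨i0, h1, _⟩ := hmem α hα
    exact Stmt8Main.prime_L α i0 h1 hn
  have hnondvd : ∀ α ∈ S, ∀ β ∈ S, α ≠ β → ¬ Stmt8Main.L α ∣ Stmt8Main.L β := by
    intro α hα β hβ hne hdvd'
    obtain ⟨iα, h1α, h2α⟩ := hmem α hα
    obtain ⟨iβ, h1β, h2β⟩ := hmem β hβ
    have heq := Stmt8Main.L_eq_smul_of_dvd iα h1α hdvd'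
    have hco : ∀ j, β j = β iα * α j := by
      intro j
      have h3 := congrArg (coeff (Finsupp.single j 1)) heq
      rwa [Stmt8Main.coeff_L, coeff_C_mul, Stmt8Main.coeff_L] at h3
    have hc0 : β iα ≠ 0 := by
      intro h0
      have h4 := h1β
      rw [hco iβ, h0, zero_mul] at h4
      exact one_ne_zero h4.symm
    have hle1 : iβ ≤ iα := by
      by_contra hlt
      push_neg at hlt
      exact hc0 (h2β iα hlt)
    have hle2 : iα ≤ iβ := by
      by_contra hlt
      push_neg at hlt
      have h5 := hco iβ
      rw [h2α iβ hlt, mul_zero, h1β] at h5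
      exact one_ne_zero h5
    have hc1 : β iα = 1 := by rw [le_antisymm hle2 hle1]; exact h1β
    exact hne (funext fun j => by rw [hco j, hc1, one_mul])
  obtain ⟨q, hq⟩ := Stmt8Aux2.prod_primes_dvd S Stmt8Main.L D hprime hdvd hnondvd
  have hPhom : (∏ α ∈ S, Stmt8Main.L α).IsHomogeneous (∑ j ∈ Finset.range n, p ^ j) := by
    have h6 := MvPolynomial.IsHomogeneous.prod S Stmt8Main.L (fun _ => 1)
      (fun α _ => Stmt8Main.L_isHomogeneous α)
    rw [Finset.sum_const, smul_eq_mul, mul_one] at h6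
    rw [← Stmt8Main.card_S n hn, ← hS]
    exact h6
  have hP0 : (∏ α ∈ S, Stmt8Main.L α) ≠ 0 :=
    Finset.prod_ne_zero_iff.mpr (fun α hα => (hprime α hα).ne_zero)
  have hDhom : D.IsHomogeneous (∑ j ∈ Finset.range n, p ^ j) := Stmt8Main.D_isHomogeneous n
  have hq' := Stmt8Aux.eq_C_of_mul_homogeneous hPhom hP0 hDhom hq.symm
  refine ⟨constantCoeff q, ?_, ?_⟩
  · intro h0
    apply Stmt8Main.D_ne_zero (p := p) n
    rw [← hD, hq, hq', h0, map_zero, mul_zero]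
  · intro k _ _ _ lam
    have hdet : (aeval lam) D = Matrix.det (Matrix.of fun i j : Fin n => lam i ^ p ^ (j:ℕ)) := by
      rw [hD]
      have h7 := RingHom.map_det (aeval lam).toRingHom (Matrix.of fun i j : Fin n =>
        (X i : MvPolynomial (Fin n) (ZMod p)) ^ p ^ (j : ℕ))
      rw [show (aeval lam) (Matrix.det (Matrix.of fun i j : Fin n =>
        (X i : MvPolynomial (Fin n) (ZMod p)) ^ p ^ (j : ℕ)))
        = (aeval lam).toRingHom (Matrix.det (Matrix.of fun i j : Fin n =>
        (X i : MvPolynomial (Fin n) (ZMod p)) ^ p ^ (j : ℕ))) from rfl, h7]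
      congr 1
      apply Matrix.ext
      intro i j
      simp [RingHom.mapMatrix_apply]
    have hL : ∀ α : Fin n → ZMod p, aeval lam (Stmt8Main.L α) = ∑ i, α i • lam i := by
      intro α
      rw [Stmt8Main.L, map_sum]
      apply Finset.sum_congr rfl
      intro i _
      rw [map_mul, aeval_X, aeval_C, Algebra.smul_def]
    rw [← hdet, hq, hq', map_mul, map_prod, aeval_C]
    rw [Finset.prod_congr rfl (fun α _ => hL α), mul_comm]
    simp
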